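/- Let v : 𝒫^n → Δ(C) be an anonymous randomized voting rule that is weakly strategy-proof. Then v is pairwise responsive and pairwise isolated. -/

import Mathlib

open Finset

section VotingPrelims

variable (C : Type) [Fintype C] [DecidableEq C]

/-- A preference ordering over the subset `A` of candidates: a duplicate-free list
enumerating exactly the members of `A`, where earlier entries are more preferred. -/
def PrefOn (A : Finset C) : Type :=
  {l : List C // l.Nodup ∧ l.toFinset = A}

/-- A (full) preference ordering on the whole candidate set. -/
abbrev Pref : Type := PrefOn C Finset.univ

variable {C}

noncomputable instance instFintypePrefOn (A : Finset C) : Fintype (PrefOn C A) :=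
  Fintype.subtype A.toList.permutations.toFinset (by
    intro l
    rw [List.mem_toFinset, List.mem_permutations]
    constructor
    · intro h
      exact ⟨h.nodup_iff.mpr A.nodup_toList,
        by rw [List.toFinset_eq_of_perm _ _ h, Finset.toList_toFinset]⟩
    · rintro ⟨h1, h2⟩
      exact List.perm_of_nodup_nodup_toFinset_eq h1 A.nodup_toList
        (by rw [h2, Finset.toList_toFinset]))

instance instDecidableEqPrefOn (A : Finset C) : DecidableEq (PrefOn C A) := fun P Q =>
  decidable_of_iff (P.1 = Q.1) Subtype.ext_iff.symm

/-- `P.pref x y` means that `x` is strictly preferred to `y` in `P`. -/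
def PrefOn.pref {A : Finset C} (P : PrefOn C A) (x y : C) : Prop :=
  P.1.idxOf x < P.1.idxOf y

theorem Pref.mem_list (P : Pref C) (z : C) : z ∈ P.1 := by
  rw [← List.mem_toFinset, P.2.2]; exact Finset.mem_univ z

/-- The top (most preferred) candidate of a full preference ordering. -/
noncomputable def Pref.top [Nonempty C] (P : Pref C) : C :=
  P.1.head?.getD (Classical.arbitrary C)

/-- The most preferred candidate of `S` according to the full preference `P`. -/
noncomputable def Pref.topOn [Nonempty C] (P : Pref C) (S : Finset C) : C :=
  (P.1.filter (fun z => decide (z ∈ S))).head?.getD (Classical.arbitrary C)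

/-- The number of voters whose top choice is `x`. -/
noncomputable def topCount [Nonempty C] {n : ℕ} (P : Fin n → Pref C) (x : C) : ℕ :=
  (Finset.univ.filter fun i => (P i).top = x).card

/-- The number of voters whose most preferred candidate among `S` is `x`. -/
noncomputable def countTop [Nonempty C] {n : ℕ} (P : Fin n → Pref C) (S : Finset C)
    (x : C) : ℕ :=
  (Finset.univ.filter fun i => (P i).topOn S = x).card

/-- The restriction of a full preference ordering to the subset `A`. -/
def Pref.restrictTo (P : Pref C) (A : Finset C) : PrefOn C A :=
  ⟨P.1.filter (fun z => decide (z ∈ A)), P.2.1.filter _, by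
    ext z
    simp only [List.mem_toFinset, List.mem_filter, decide_eq_true_eq]
    exact ⟨fun h => h.2, fun h => ⟨Pref.mem_list P z, h⟩⟩⟩

/-- `d` is a probability distribution on the candidates. -/
def IsDist (d : C → ℝ) : Prop :=
  (∀ x, 0 ≤ d x) ∧ ∑ x, d x = 1

/-- `d` is a probability distribution on the candidates, supported on `A`. -/
def IsDistOn (A : Finset C) (d : C → ℝ) : Prop :=
  IsDist d ∧ ∀ x ∉ A, d x = 0

/-- `v` is a (randomized) voting rule: it maps every profile to a distribution. -/
def IsVotingRule {A : Finset C} {n : ℕ} (v : (Fin n → PrefOn C A) → C → ℝ) : Prop :=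
  ∀ P, IsDist (v P)

/-- `φ` is a belief, i.e. a probability distribution over preference orderings. -/
def IsBelief {A : Finset C} (φ : PrefOn C A → ℝ) : Prop :=
  (∀ P, 0 ≤ φ P) ∧ ∑ P, φ P = 1

/-- Anonymity: permuting the voters does not change the outcome distribution. -/
def Anonymous {A : Finset C} {n : ℕ} (v : (Fin n → PrefOn C A) → C → ℝ) : Prop :=
  ∀ σ : Equiv.Perm (Fin n), ∀ P : Fin n → PrefOn C A, v (fun i => P (σ i)) = v P

/-- Utilities take values in `[0,1]`. -/
def Utility01 (u : C → ℝ) : Prop := ∀ x, 0 ≤ u x ∧ u x ≤ 1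

/-- The utility function `u` is consistent with the preference ordering `P` on `A`. -/
def ConsistentOn (A : Finset C) (u : C → ℝ) (P : PrefOn C A) : Prop :=
  ∀ x ∈ A, ∀ y ∈ A, (u y < u x ↔ P.pref x y)

/-- The profile in which voter `i` reports `Pi` and the remaining voters report `R`. -/
def combine {A : Finset C} {n : ℕ} (i : Fin n) (Pi : PrefOn C A)
    (R : {j : Fin n // j ≠ i} → PrefOn C A) : Fin n → PrefOn C A :=
  fun j => if h : j = i then Pi else R ⟨j, h⟩

/-- The expected utility of voter `i` when reporting `Pi`, where the remaining `n-1`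
voters' preferences are drawn i.i.d. from the belief `φ`. -/
noncomputable def EU {A : Finset C} {n : ℕ} (v : (Fin n → PrefOn C A) → C → ℝ)
    (u : C → ℝ) (φ : PrefOn C A → ℝ) (i : Fin n) (Pi : PrefOn C A) : ℝ :=
  ∑ R : {j : Fin n // j ≠ i} → PrefOn C A,
    (∏ j, φ (R j)) * ∑ x, v (combine i Pi R) x * u x

/-- Strategy-proofness with respect to a set `Φ` of (i.i.d.) beliefs. -/
def SPwrt {A : Finset C} {n : ℕ} (v : (Fin n → PrefOn C A) → C → ℝ)
    (Φ : Set (PrefOn C A → ℝ)) : Prop :=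
  ∀ i : Fin n, ∀ Pi Pi' : PrefOn C A, ∀ φ ∈ Φ, IsBelief φ →
    ∀ u : C → ℝ, Utility01 u → ConsistentOn A u Pi →
      EU v u φ i Pi' ≤ EU v u φ i Pi

/-- Weak strategy-proofness: strategy-proofness w.r.t. all (i.i.d.) beliefs. -/
def WeaklySP {n : ℕ} (v : (Fin n → Pref C) → C → ℝ) : Prop :=
  SPwrt v Set.univ

/-- `ε`-super-weak unanimity. -/
def SuperWeakUnanimity [Nonempty C] {n : ℕ} (v : (Fin n → Pref C) → C → ℝ) (ε : ℝ) : Prop :=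
  ∀ x : C, ∃ P : Fin n → Pref C, (∀ i, (P i).top = x) ∧ 1 - ε ≤ v P x

/-- `ε`-strong unanimity. -/
def StrongUnanimity [Nonempty C] {n : ℕ} (v : (Fin n → Pref C) → C → ℝ) (ε : ℝ) : Prop :=
  ∀ x : C, ∀ P : Fin n → Pref C, (∀ i, (P i).top = x) → 1 - ε ≤ v P x

/-- `ε`-Pareto efficiency. -/
def ParetoEff {n : ℕ} (v : (Fin n → Pref C) → C → ℝ) (ε : ℝ) : Prop :=
  ∀ x y : C, ∀ P : Fin n → Pref C, (∀ i, (P i).pref x y) → v P y ≤ ε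

/-- An `α`-coarse belief: all probabilities are integer multiples of some `β ≥ α`. -/
def CoarseBelief {A : Finset C} (α : ℝ) (φ : PrefOn C A → ℝ) : Prop :=
  ∃ β : ℝ, α ≤ β ∧ ∀ P, ∃ k : ℤ, φ P = k * β

/-- An `α`-coarse utility function: any two utilities are equal or at least `α` apart. -/
def CoarseUtility (α : ℝ) (u : C → ℝ) : Prop :=
  ∀ x y : C, u x = u y ∨ α ≤ |u x - u y|

/-- Large-scale `ε`-strategy-proofness w.r.t. coarse i.i.d. beliefs, with rate `p`. -/
def LargeScaleSP (v : (n : ℕ) → (Fin n → Pref C) → C → ℝ) (ε : ℕ → ℝ) (p : ℝ → ℝ) : Prop :=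
  ∀ α : ℝ, 0 < α → ∀ n : ℕ, p (1 / α) ≤ (n : ℝ) →
    ∀ i : Fin n, ∀ Pi Pi' : Pref C, ∀ φ : Pref C → ℝ, IsBelief φ → CoarseBelief α φ →
      ∀ u : C → ℝ, Utility01 u → CoarseUtility α u → ConsistentOn Finset.univ u Pi →
        EU (v n) u φ i Pi' - ε n ≤ EU (v n) u φ i Pi

/-- The restriction of a belief to the candidate subset `A`. -/
noncomputable def beliefRestrict (φ : Pref C → ℝ) (A : Finset C) : PrefOn C A → ℝ :=
  fun Q => ∑ P : Pref C, if P.restrictTo A = Q then φ P else 0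

/-- The punishing voting rule: choose a uniform voter, then her `j`-th ranked candidate
with probability proportional to `m - j`. -/
noncomputable def vPunish (n : ℕ) (P : Fin n → Pref C) (x : C) : ℝ :=
  (1 / (n : ℝ)) * ∑ i : Fin n,
    (((Fintype.card C : ℝ) - ((P i).1.idxOf x + 1)) /
      (∑ ℓ ∈ Finset.range (Fintype.card C), ((Fintype.card C : ℝ) - ((ℓ : ℝ) + 1))))

end VotingPrelims

section MorePrelims

variable {C : Type} [Fintype C] [DecidableEq C]

/-- `x` is directly above `y` in the preference ordering `P`. -/
def DirectlyAbove (P : Pref C) (x y : C) : Prop :=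
  P.pref x y ∧ ∀ z : C, z ≠ x → z ≠ y → (P.pref z x ↔ P.pref z y)

/-- The preference obtained from `P` by exchanging the positions of `x` and `y`. -/
def Pref.swapC (P : Pref C) (x y : C) : Pref C :=
  ⟨P.1.map (Equiv.swap x y), P.2.1.map (Equiv.injective _), by
    apply Finset.eq_univ_iff_forall.mpr
    intro z
    rw [List.mem_toFinset, List.mem_map]
    exact ⟨Equiv.swap x y z, Pref.mem_list P _, Equiv.swap_apply_self x y z⟩⟩

/-- Pairwise responsiveness. -/
def PairwiseResponsive {n : ℕ} (v : (Fin n → Pref C) → C → ℝ) : Prop :=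
  ∀ P : Fin n → Pref C, ∀ i : Fin n, ∀ x y : C, DirectlyAbove (P i) x y →
    ∀ z : C, z ≠ x → z ≠ y →
      v (Function.update P i ((P i).swapC x y)) z = v P z

/-- Pairwise isolation. -/
def PairwiseIsolated {n : ℕ} (v : (Fin n → Pref C) → C → ℝ) : Prop :=
  ∀ x y : C, ∀ i : Fin n, ∀ P P' : Fin n → Pref C,
    DirectlyAbove (P i) x y → P' i = P i →
    (∀ j : Fin n, (P j).pref x y ↔ (P' j).pref x y) →
      v (Function.update P' i ((P' i).swapC x y)) y - v P' y
        = v (Function.update P i ((P i).swapC x y)) y - v P y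

/-- The ordering that puts `x` on top, with the rest ordered as in `a`. -/
def prefTopList (a : Pref C) (x : C) : Pref C :=
  ⟨x :: a.1.erase x, by
    rw [List.nodup_cons]
    exact ⟨a.2.1.not_mem_erase, a.2.1.erase x⟩, by
    apply Finset.eq_univ_iff_forall.mpr
    intro z
    rw [List.mem_toFinset, List.mem_cons]
    by_cases hz : z = x
    · exact Or.inl hz
    · exact Or.inr ((List.mem_erase_of_ne hz).mpr (Pref.mem_list a z))⟩

/-- The ordering `a` with `x` moved to the bottom. -/
def prefBotList (a : Pref C) (x : C) : Pref C :=
  ⟨a.1.erase x ++ [x], by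
    rw [List.nodup_append]
    exact ⟨a.2.1.erase x, List.nodup_singleton x,
      fun z hz b hb hzb => absurd hz (by
        rw [hzb, List.mem_singleton.mp hb]; exact a.2.1.not_mem_erase)⟩, by
    apply Finset.eq_univ_iff_forall.mpr
    intro z
    rw [List.mem_toFinset, List.mem_append, List.mem_singleton]
    by_cases hz : z = x
    · exact Or.inr hz
    · exact Or.inl ((List.mem_erase_of_ne hz).mpr (Pref.mem_list a z))⟩

/-- The profile `P⃗^{x,j}`: the first `j` voters rank `x` first followed by the remaining
candidates in the order `a`; the remaining voters use `a` with `x` moved to the bottom. -/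
def profileXJ (a : Pref C) (x : C) (j : ℕ) (n : ℕ) : Fin n → Pref C :=
  fun i => if (i : ℕ) < j then prefTopList a x else prefBotList a x

/-- `v'(x,j)`: the selection probability of `x` on the profile `P⃗^{x,j}`. -/
def vPrime {n : ℕ} (v : (Fin n → Pref C) → C → ℝ) (a : Pref C) (x : C) (j : ℕ) : ℝ :=
  v (profileXJ a x j n) x

/-- One round of repeated-plurality elimination with margin `T`: keep exactly the
candidates of `S` whose top-choice count is within `T` of the highest count. -/
noncomputable def plStep [Nonempty C] {n : ℕ} (P : Fin n → Pref C) (T : ℝ) (S : Finset C) :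
    Finset C :=
  S.filter (fun x => ((S.sup (countTop P S) : ℕ) : ℝ) ≤ (countTop P S x : ℝ) + T)

/-- The set of remaining candidates after repeated-plurality elimination. -/
noncomputable def plFinal [Nonempty C] {n : ℕ} (P : Fin n → Pref C) (T : ℝ) : Finset C :=
  (fun S => plStep P T S)^[Fintype.card C] Finset.univ

/-- The plurality winner among `S`, with ties broken by `tb`. -/
noncomputable def pluralityWinner [Nonempty C] {n : ℕ} (tb : Finset C → C)
    (P : Fin n → Pref C) (S : Finset C) : C :=
  tb (S.filter (fun x => countTop P S x = S.sup (countTop P S)))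

/-- Repeated Plurality Elimination + Plurality Selection. -/
noncomputable def vPl [Nonempty C] (δ : ℝ) (tb : Finset C → C) (n : ℕ)
    (P : Fin n → Pref C) (x : C) : ℝ :=
  if x = pluralityWinner tb P (plFinal P ((n : ℝ) ^ ((1 : ℝ) / 2 + δ))) then 1 else 0

/-- One round of approximate instant-runoff elimination with margin `T`: eliminate the
candidates of `S` whose top-choice count is within `T` of the least count, unless this
would eliminate everyone. -/
noncomputable def irvStep [Nonempty C] {n : ℕ} (P : Fin n → Pref C) (T : ℝ) (S : Finset C) :
    Finset C :=
  if h : S.Nonempty then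
    let E := S.filter (fun x =>
      (countTop P S x : ℝ) ≤ (((S.image (countTop P S)).min' (h.image _) : ℕ) : ℝ) + T)
    if E = S then S else S \ E
  else S

/-- The set of remaining candidates after approximate instant-runoff elimination. -/
noncomputable def irvFinal [Nonempty C] {n : ℕ} (P : Fin n → Pref C) (T : ℝ) : Finset C :=
  (fun S => irvStep P T S)^[Fintype.card C] Finset.univ

/-- Approximate Instant-Runoff Voting. -/
noncomputable def vIrv [Nonempty C] (δ : ℝ) (tb : Finset C → C) (n : ℕ)
    (P : Fin n → Pref C) (x : C) : ℝ :=
  if x = pluralityWinner tb P (irvFinal P ((n : ℝ) ^ ((1 : ℝ) / 2 + δ))) then 1 else 0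

/-- The position (0-indexed rank) of candidate `x` in the ordering `P`. -/
def Pref.rank (P : Pref C) (x : C) : Fin (Fintype.card C) :=
  ⟨P.1.idxOf x, by
    have hx : x ∈ P.1 := Pref.mem_list P x
    have hlen : P.1.length = Fintype.card C := by
      rw [← List.toFinset_card_of_nodup P.2.1, P.2.2, Finset.card_univ]
    rw [← hlen]
    exact List.idxOf_lt_length_of_mem hx⟩

/-- The score of candidate `x` under the positional scoring rule with points vector `pv`. -/
def scoreOf (pv : Fin (Fintype.card C) → ℕ) {n : ℕ} (P : Fin n → Pref C) (x : C) : ℕ :=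
  ∑ i : Fin n, pv ((P i).rank x)

/-- Scoring Rule Elimination + Input-Independent Selection. -/
noncomputable def vScore (δ : ℝ) (pv : Fin (Fintype.card C) → ℕ) (sel : Finset C → C → ℝ)
    (n : ℕ) (P : Fin n → Pref C) (x : C) : ℝ :=
  sel (Finset.univ.filter (fun y =>
    ((Finset.univ.sup (scoreOf pv P) : ℕ) : ℝ) ≤ (scoreOf pv P y : ℝ) + (n : ℝ) ^ ((1 : ℝ) / 2 + δ))) x

end MorePrelims


section AuxLemmas

variable {C : Type} [Fintype C] [DecidableEq C]

theorem PrefAux.length_eq (P : Pref C) : P.1.length = Fintype.card C := by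
  rw [← List.toFinset_card_of_nodup P.2.1, P.2.2, Finset.card_univ]

theorem PrefAux.idx_lt (P : Pref C) (a : C) : P.1.idxOf a < P.1.length :=
  List.idxOf_lt_length_iff.2 (Pref.mem_list P a)

theorem PrefAux.idx_inj {P : Pref C} {a b : C} (h : P.1.idxOf a = P.1.idxOf b) : a = b :=
  (List.idxOf_inj (Pref.mem_list P a)).1 h

theorem PrefAux.pref_def (P : Pref C) (a b : C) :
    P.pref a b ↔ P.1.idxOf a < P.1.idxOf b := Iff.rfl

theorem PrefAux.pref_irrefl (P : Pref C) (a : C) : ¬ P.pref a a := by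
  rw [PrefAux.pref_def]; omega

theorem PrefAux.pref_ne {P : Pref C} {a b : C} (h : P.pref a b) : a ≠ b := by
  intro he; subst he; exact PrefAux.pref_irrefl P a h

theorem PrefAux.pref_asymm {P : Pref C} {a b : C} (h : P.pref a b) : ¬ P.pref b a := by
  rw [PrefAux.pref_def] at h ⊢; omega

theorem PrefAux.pref_trans {P : Pref C} {a b c : C} (h1 : P.pref a b) (h2 : P.pref b c) :
    P.pref a c := by
  rw [PrefAux.pref_def] at h1 h2 ⊢; omega

theorem PrefAux.pref_total {P : Pref C} {a b : C} (h : a ≠ b) : P.pref a b ∨ P.pref b a := by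
  rcases Nat.lt_trichotomy (P.1.idxOf a) (P.1.idxOf b) with h1 | h1 | h1
  · exact Or.inl h1
  · exact absurd (PrefAux.idx_inj h1) h
  · exact Or.inr h1

theorem PrefAux.idxOf_map {f : C → C} (hf : Function.Injective f) (l : List C) (a : C) :
    (l.map f).idxOf (f a) = l.idxOf a := by
  induction l with
  | nil => rfl
  | cons b t ih =>
    rw [List.map_cons]
    by_cases hb : b = a
    · subst hb; rw [List.idxOf_cons_self, List.idxOf_cons_self]
    · rw [List.idxOf_cons_ne _ (fun h => hb (hf h)), List.idxOf_cons_ne _ hb, ih]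

theorem PrefAux.idx_swapC (P : Pref C) (x y w : C) :
    (P.swapC x y).1.idxOf w = P.1.idxOf (Equiv.swap x y w) := by
  have h1 : w = Equiv.swap x y (Equiv.swap x y w) := (Equiv.swap_apply_self x y w).symm
  have h2 : (P.swapC x y).1 = P.1.map (Equiv.swap x y) := rfl
  rw [h2]
  conv_lhs => rw [h1]
  exact PrefAux.idxOf_map (Equiv.injective _) P.1 _

theorem PrefAux.idx_getElem (P : Pref C) (k : ℕ) (h : k < P.1.length) :
    P.1.idxOf (P.1[k]) = k :=
  List.Nodup.idxOf_getElem P.2.1 k h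

theorem PrefAux.directlyAbove_iff {P : Pref C} {x y : C} (hxy : x ≠ y) :
    DirectlyAbove P x y ↔ P.1.idxOf y = P.1.idxOf x + 1 := by
  constructor
  · rintro ⟨h1, h2⟩
    rw [PrefAux.pref_def] at h1
    by_contra hne
    have hlt : P.1.idxOf x + 1 < P.1.idxOf y := by omega
    have hlen : P.1.idxOf x + 1 < P.1.length := lt_trans hlt (PrefAux.idx_lt P y)
    set w := P.1[P.1.idxOf x + 1] with hw
    have hiw : P.1.idxOf w = P.1.idxOf x + 1 := PrefAux.idx_getElem P _ hlen
    have hwx : w ≠ x := by intro he; rw [he] at hiw; omega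
    have hwy : w ≠ y := by intro he; rw [he] at hiw; omega
    have := h2 w hwx hwy
    rw [PrefAux.pref_def, PrefAux.pref_def, hiw] at this
    omega
  · intro h
    constructor
    · rw [PrefAux.pref_def]; omega
    · intro w hwx hwy
      rw [PrefAux.pref_def, PrefAux.pref_def]
      have : P.1.idxOf w ≠ P.1.idxOf x := fun he => hwx (PrefAux.idx_inj he)
      omega

theorem PrefAux.exists_directlyAbove {P : Pref C} {a b : C} (h : P.pref a b)
    (hadj : P.1.idxOf b = P.1.idxOf a + 1) : DirectlyAbove P a b :=
  (PrefAux.directlyAbove_iff (PrefAux.pref_ne h)).2 hadj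

theorem PrefAux.list_eq_of_orderIso (l₁ : List C) : ∀ (l₂ : List C), l₁.Nodup → l₂.Nodup →
    l₁.toFinset = l₂.toFinset →
    (∀ a b, a ∈ l₁ → b ∈ l₁ → (l₁.idxOf a < l₁.idxOf b ↔ l₂.idxOf a < l₂.idxOf b)) →
    l₁ = l₂ := by
  induction l₁ with
  | nil =>
    intro l₂ _ _ hfs _
    have : l₂.toFinset = ∅ := by rw [← hfs]; simp
    rw [List.toFinset_eq_empty_iff] at this
    exact this.symm
  | cons a t ih =>
    intro l₂ h1 h2 hfs hord
    have ha2 : a ∈ l₂ := by rw [← List.mem_toFinset, ← hfs]; simp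
    cases l₂ with
    | nil => simp at ha2
    | cons c t₂ =>
      have hca : c = a := by
        by_contra hca
        have hc1 : c ∈ a :: t := by
          rw [← List.mem_toFinset, hfs]; simp
        have h0 : (a :: t).idxOf a < (a :: t).idxOf c := by
          rw [List.idxOf_cons_self, List.idxOf_cons_ne _ (Ne.symm hca)]
          exact Nat.succ_pos _
        have h3 := (hord a c (by simp) hc1).1 h0
        rw [List.idxOf_cons_self] at h3
        omega
      subst c
      have hat : a ∉ t := (List.nodup_cons.1 h1).1
      have hat₂ : a ∉ t₂ := (List.nodup_cons.1 h2).1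
      congr 1
      apply ih t₂ (List.nodup_cons.1 h1).2 (List.nodup_cons.1 h2).2
      · ext b
        by_cases hb : b = a
        · subst hb; simp [hat, hat₂]
        · have := Finset.ext_iff.1 hfs b
          simp only [List.toFinset_cons, Finset.mem_insert, List.mem_toFinset] at this
          simp only [List.mem_toFinset]
          constructor
          · intro hbt; rcases this.1 (Or.inr hbt) with h | h; exact absurd h hb; exact h
          · intro hbt; rcases this.2 (Or.inr hbt) with h | h; exact absurd h hb; exact h
      · intro b b' hb hb'
        have hba : a ≠ b := fun h => hat (h ▸ hb)
        have hb'a : a ≠ b' := fun h => hat (h ▸ hb')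
        have key := hord b b' (List.mem_cons_of_mem _ hb) (List.mem_cons_of_mem _ hb')
        rw [List.idxOf_cons_ne _ hba, List.idxOf_cons_ne _ hb'a,
            List.idxOf_cons_ne _ hba, List.idxOf_cons_ne _ hb'a] at key
        simpa [Nat.succ_lt_succ_iff] using key

theorem PrefAux.pref_ext {P Q : Pref C} (h : ∀ a b, P.pref a b ↔ Q.pref a b) : P = Q := by
  apply Subtype.ext
  apply PrefAux.list_eq_of_orderIso P.1 Q.1 P.2.1 Q.2.1 (P.2.2.trans Q.2.2.symm)
  intro a b _ _
  exact h a b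

end AuxLemmas


section ExtractLemmas

theorem AuxReal.nonneg_of_forall_small {B K ε : ℝ} (hε : 0 < ε)
    (h : ∀ t : ℝ, 0 < t → t < ε → 0 ≤ B + t * K) : 0 ≤ B := by
  by_contra hB
  push_neg at hB
  have hKpos : (0:ℝ) < |K| + 1 := by positivity
  set t := min (ε/2) (-B / (|K| + 1)) with ht
  have htpos : 0 < t := lt_min (by linarith) (div_pos (by linarith) hKpos)
  have htlt : t < ε := lt_of_le_of_lt (min_le_left _ _) (by linarith)
  have h1 := h t htpos htlt
  have h2 : t * K ≤ t * |K| := mul_le_mul_of_nonneg_left (le_abs_self K) htpos.le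
  have h3 : t ≤ -B / (|K| + 1) := min_le_right _ _
  have h4 : t * |K| ≤ (-B / (|K| + 1)) * |K| :=
    mul_le_mul_of_nonneg_right h3 (abs_nonneg K)
  have h5 : (-B / (|K| + 1)) * |K| < -B := by
    rw [div_mul_eq_mul_div, div_lt_iff₀ hKpos]
    nlinarith [abs_nonneg K]
  linarith

theorem AuxReal.eq_zero_of_local {B K ε : ℝ} (hε : 0 < ε)
    (h1 : ∀ t : ℝ, 0 < t → t < ε → 0 ≤ B + t * K)
    (h2 : ∀ t : ℝ, -ε < t → t < 0 → B + t * K ≤ 0) : B = 0 := by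
  have hp : 0 ≤ B := AuxReal.nonneg_of_forall_small hε h1
  have hn : 0 ≤ -B := by
    apply AuxReal.nonneg_of_forall_small hε (K := K)
    intro t ht1 ht2
    have := h2 (-t) (by linarith) (by linarith)
    linarith
  linarith

theorem AuxNat.digit_unique {n : ℕ} (hn : 0 < n) :
    ∀ (k : ℕ) (d e : ℕ → ℕ), (∀ v, d v < n) → (∀ v, e v < n) →
    ((∑ v ∈ Finset.range k, d v * n ^ v) = ∑ v ∈ Finset.range k, e v * n ^ v) →
    ∀ v < k, d v = e v := by
  intro k
  induction k with
  | zero => intro d e _ _ _ v hv; omega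
  | succ k ih =>
    intro d e hd he hsum v hv
    rw [Finset.sum_range_succ', Finset.sum_range_succ'] at hsum
    have key : ∀ (f : ℕ → ℕ), (∑ i ∈ Finset.range k, f (i+1) * n ^ (i+1))
        = n * ∑ i ∈ Finset.range k, f (i+1) * n ^ i := by
      intro f; rw [Finset.mul_sum]; apply Finset.sum_congr rfl; intro i _; ring
    rw [key d, key e] at hsum
    simp only [pow_zero, mul_one] at hsum
    have h0 : d 0 = e 0 := by
      have hmod := congrArg (· % n) hsum
      simpa [Nat.mul_add_mod, Nat.mod_eq_of_lt (hd 0), Nat.mod_eq_of_lt (he 0)] using hmod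
    rcases Nat.eq_zero_or_pos v with rfl | hvpos
    · exact h0
    · have hS : (∑ i ∈ Finset.range k, d (i+1) * n ^ i)
          = ∑ i ∈ Finset.range k, e (i+1) * n ^ i := by
        have : n * (∑ i ∈ Finset.range k, d (i+1) * n ^ i)
            = n * ∑ i ∈ Finset.range k, e (i+1) * n ^ i := by omega
        exact Nat.eq_of_mul_eq_mul_left hn this
      have h2 := ih (fun v => d (v+1)) (fun v => e (v+1)) (fun v => hd _) (fun v => he _) hS
        (v - 1) (by omega)
      have hv1 : v - 1 + 1 = v := by omega
      rwa [hv1] at h2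

theorem AuxPerm.exists_perm_of_fibers {J Q : Type} [Fintype J] [DecidableEq Q]
    (R R₀ : J → Q)
    (h : ∀ q : Q, Fintype.card {j // R j = q} = Fintype.card {j // R₀ j = q}) :
    ∃ σ : Equiv.Perm J, R₀ ∘ σ = R := by
  have e : ∀ q : Q, {j // R j = q} ≃ {j // R₀ j = q} :=
    fun q => Fintype.equivOfCardEq (h q)
  exact ⟨Equiv.ofFiberEquiv e, funext fun j => Equiv.ofFiberEquiv_map e j⟩

theorem AuxPoly.coeff_extract {Q : Type} [Fintype Q] [DecidableEq Q] [Nonempty Q]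
    {J : Type} [Fintype J] [DecidableEq J] {n : ℕ} (hJ : Fintype.card J < n)
    (c : (J → Q) → ℝ)
    (hsym : ∀ (σ : Equiv.Perm J) (R : J → Q), c (R ∘ σ) = c R)
    (hzero : ∀ φ : Q → ℝ, (∀ q, 0 ≤ φ q) → (∑ q, φ q) = 1 →
      (∑ R : J → Q, (∏ j, φ (R j)) * c R) = 0) :
    ∀ R, c R = 0 := by
  classical
  have hn : 0 < n := lt_of_le_of_lt (Nat.zero_le _) hJ
  -- step 1: the identity holds for all strictly positive weight functions
  have hzero' : ∀ φ : Q → ℝ, (∀ q, 0 < φ q) →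
      (∑ R : J → Q, (∏ j, φ (R j)) * c R) = 0 := by
    intro φ hφ
    set T : ℝ := ∑ q, φ q with hT
    have hTpos : 0 < T := Finset.sum_pos (fun q _ => hφ q) ⟨Classical.arbitrary Q,
      Finset.mem_univ _⟩
    have hb := hzero (fun q => φ q / T) (fun q => (div_nonneg (hφ q).le hTpos.le))
      (by rw [← Finset.sum_div]; exact div_self hTpos.ne')
    set d := Fintype.card J with hd
    have hprod : ∀ R : J → Q, (∏ j, φ (R j) / T) = (∏ j, φ (R j)) / T ^ d := by
      intro R
      rw [Finset.prod_div_distrib, Finset.prod_const, hd, Finset.card_univ]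
    rw [Finset.sum_congr rfl (fun R _ => by rw [hprod R])] at hb
    have : (∑ R : J → Q, (∏ j, φ (R j)) * c R) / T ^ d = 0 := by
      rw [Finset.sum_div]
      rw [← hb]
      apply Finset.sum_congr rfl
      intro R _
      ring
    have hTd : T ^ d ≠ 0 := pow_ne_zero _ hTpos.ne'
    rcases div_eq_zero_iff.1 this with h | h
    · exact h
    · exact absurd h hTd
  -- encoding
  set K := Fintype.card Q with hK
  set idx : Q ≃ Fin K := Fintype.equivFin Q with hidx
  set wt : (J → Q) → ℕ := fun R => ∑ j, n ^ ((idx (R j)) : ℕ) with hwt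
  set p : Polynomial ℝ := ∑ R : J → Q, Polynomial.monomial (wt R) (c R) with hp
  have heval : ∀ s : ℝ, 0 < s → p.eval s = 0 := by
    intro s hs
    have h1 : p.eval s = ∑ R : J → Q, c R * s ^ (wt R) := by
      rw [hp, Polynomial.eval_finset_sum]
      apply Finset.sum_congr rfl
      intro R _
      rw [Polynomial.eval_monomial]
    rw [h1]
    have h2 := hzero' (fun q => s ^ (n ^ ((idx q) : ℕ))) (fun q => pow_pos hs _)
    rw [← h2]
    apply Finset.sum_congr rfl
    intro R _
    rw [Finset.prod_pow_eq_pow_sum]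
    ring
  have hp0 : p = 0 := by
    apply Polynomial.eq_zero_of_infinite_isRoot
    apply Set.Infinite.mono (s := Set.Ioo (0:ℝ) 1)
    · intro s hs
      exact heval s hs.1
    · exact Set.Ioo_infinite (by norm_num)
  -- coefficient extraction
  intro R₀
  have hco : p.coeff (wt R₀) = 0 := by rw [hp0]; simp
  rw [hp, Polynomial.finset_sum_coeff] at hco
  simp only [Polynomial.coeff_monomial] at hco
  have hco2 : (∑ R : J → Q, if wt R = wt R₀ then c R else 0) = 0 := hco
  -- every R with the same weight is a rearrangement of R₀
  have hsum2 : ∀ (R' : J → Q), wt R' = ∑ v ∈ Finset.range K,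
      (Finset.univ.filter (fun j => ((idx (R' j)) : ℕ) = v)).card * n ^ v := by
    intro R'
    show (∑ j : J, n ^ ((idx (R' j)) : ℕ)) = _
    rw [← Finset.sum_fiberwise_of_maps_to (g := fun j => ((idx (R' j)) : ℕ))
      (t := Finset.range K) (fun j _ => Finset.mem_range.2 (Fin.is_lt _))
      (fun j => n ^ ((idx (R' j)) : ℕ))]
    apply Finset.sum_congr rfl
    intro v _
    rw [Finset.sum_congr rfl (fun j hj => by rw [(Finset.mem_filter.1 hj).2]),
      Finset.sum_const, smul_eq_mul]
  have hclass : ∀ R : J → Q, wt R = wt R₀ → c R = c R₀ := by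
    intro R hR
    have hbound : ∀ (R' : J → Q) (v : ℕ),
        (Finset.univ.filter (fun j => ((idx (R' j)) : ℕ) = v)).card < n := fun R' v =>
      lt_of_le_of_lt (le_trans (Finset.card_filter_le _ _) (le_of_eq (Finset.card_univ))) hJ
    have hcount := AuxNat.digit_unique hn K
      (fun v => (Finset.univ.filter (fun j => ((idx (R j)) : ℕ) = v)).card)
      (fun v => (Finset.univ.filter (fun j => ((idx (R₀ j)) : ℕ) = v)).card)
      (hbound R) (hbound R₀) (by rw [← hsum2 R, ← hsum2 R₀]; exact hR)
    have hfib : ∀ q : Q, Fintype.card {j // R j = q} = Fintype.card {j // R₀ j = q} := by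
      intro q
      rw [Fintype.card_subtype, Fintype.card_subtype]
      have hiff : ∀ (R' : J → Q) (j : J), R' j = q ↔ ((idx (R' j)) : ℕ) = ((idx q) : ℕ) := by
        intro R' j
        constructor
        · intro h; rw [h]
        · intro h
          exact idx.injective (Fin.ext h)
      rw [Finset.filter_congr (fun j _ => hiff R j), Finset.filter_congr (fun j _ => hiff R₀ j)]
      exact hcount ((idx q) : ℕ) (Fin.is_lt _)
    obtain ⟨σ, hσ⟩ := AuxPerm.exists_perm_of_fibers R R₀ hfib
    rw [← hσ]
    exact hsym σ R₀
  have hco3 : (∑ R ∈ Finset.univ.filter (fun R : J → Q => wt R = wt R₀), c R₀) = 0 := by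
    rw [Finset.sum_filter]
    refine Eq.trans ?_ hco2
    apply Finset.sum_congr rfl
    intro R _
    by_cases h : wt R = wt R₀
    · rw [if_pos h, if_pos h, hclass R h]
    · rw [if_neg h, if_neg h]
  rw [Finset.sum_const, nsmul_eq_mul] at hco3
  have hcard : (Finset.univ.filter (fun R : J → Q => wt R = wt R₀)).card ≠ 0 := by
    apply Nat.pos_iff_ne_zero.1
    apply Finset.card_pos.2
    exact ⟨R₀, Finset.mem_filter.2 ⟨Finset.mem_univ _, rfl⟩⟩
  rcases mul_eq_zero.1 hco3 with h | h
  · exact absurd (Nat.cast_eq_zero.1 h) hcard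
  · exact h

end ExtractLemmas


section RespProof

variable {C : Type} [Fintype C] [DecidableEq C]

/-- The perturbation used to build utility functions. -/
noncomputable def pert (x y z : C) (t s : ℝ) (w : C) : ℝ :=
  if w = x then 1/2 - t else if w = y then t - 1/2 else if w = z then -s else 0

/-- The perturbed utility function. -/
noncomputable def upert (Pi : Pref C) (x y z : C) (t s : ℝ) (w : C) : ℝ :=
  ((Fintype.card C : ℝ) + 1 - ((Pi.1.idxOf w : ℝ) + pert x y z t s w)) /
    ((Fintype.card C : ℝ) + 2)

theorem pert_x {x y z : C} (t s : ℝ) : pert x y z t s x = 1/2 - t := by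
  rw [pert, if_pos rfl]

theorem pert_y {x y z : C} (hxy : x ≠ y) (t s : ℝ) : pert x y z t s y = t - 1/2 := by
  rw [pert, if_neg (Ne.symm hxy), if_pos rfl]

theorem pert_z {x y z : C} (hzx : z ≠ x) (hzy : z ≠ y) (t s : ℝ) :
    pert x y z t s z = -s := by
  rw [pert, if_neg hzx, if_neg hzy, if_pos rfl]

theorem pert_other {x y z w : C} (hwx : w ≠ x) (hwy : w ≠ y) (hwz : w ≠ z) (t s : ℝ) :
    pert x y z t s w = 0 := by
  rw [pert, if_neg hwx, if_neg hwy, if_neg hwz]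

theorem pert_small {x y z : C} {t s : ℝ} (ht : |t| < 1/4) (hs : |s| < 1/4) (w : C) :
    |pert x y z t s w| < 3/4 := by
  rw [abs_lt] at ht hs ⊢
  rw [pert]
  split_ifs <;> constructor <;> linarith

theorem pert_tiny {x y z : C} {t s : ℝ} (hs : |s| < 1/4) {w : C} (hwx : w ≠ x)
    (hwy : w ≠ y) : |pert x y z t s w| < 1/4 := by
  rw [abs_lt] at hs ⊢
  rw [pert, if_neg hwx, if_neg hwy]
  split_ifs <;> constructor <;> linarith

theorem abs_sub_le' (a b : ℝ) : |a - b| ≤ |a| + |b| := by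
  rw [sub_eq_add_neg]
  refine (abs_add_le _ _).trans ?_
  rw [abs_neg]

theorem pert_gap {x y z : C} {t s : ℝ} (ht : |t| < 1/4) (hs : |s| < 1/4) {a b : C}
    (hab : a ≠ b) (h1 : ¬(a = x ∧ b = y)) (h2 : ¬(a = y ∧ b = x)) :
    |pert x y z t s a - pert x y z t s b| < 1 := by
  have key := abs_sub_le' (pert x y z t s a) (pert x y z t s b)
  by_cases ha : a = x ∨ a = y
  · have hbx : b ≠ x := by
      rintro rfl
      rcases ha with rfl | rfl
      · exact hab rfl
      · exact h2 ⟨rfl, rfl⟩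
    have hby : b ≠ y := by
      rintro rfl
      rcases ha with rfl | rfl
      · exact h1 ⟨rfl, rfl⟩
      · exact hab rfl
    have t1 := pert_tiny (x := x) (y := y) (z := z) (t := t) hs hbx hby
    have t2 := pert_small (x := x) (y := y) (z := z) ht hs a
    linarith
  · push_neg at ha
    have t1 := pert_tiny (x := x) (y := y) (z := z) (t := t) hs ha.1 ha.2
    have t2 := pert_small (x := x) (y := y) (z := z) ht hs b
    linarith

theorem cast_key (ρa ρb : ℕ) (Da Db : ℝ) (hne : ρa ≠ ρb) (h : |Da - Db| < 1) :
    ((ρa : ℝ) + Da < (ρb : ℝ) + Db) ↔ ρa < ρb := by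
  rw [abs_lt] at h
  constructor
  · intro hlt
    by_contra hn2
    push_neg at hn2
    have hlt2 : ρb < ρa := lt_of_le_of_ne hn2 (Ne.symm hne)
    have : (ρb : ℝ) + 1 ≤ (ρa : ℝ) := by exact_mod_cast Nat.succ_le_of_lt hlt2
    linarith
  · intro hlt
    have : (ρa : ℝ) + 1 ≤ (ρb : ℝ) := by exact_mod_cast Nat.succ_le_of_lt hlt
    linarith

theorem upert_lt_iff (Pi : Pref C) (x y z : C) (t s : ℝ) (a b : C) :
    upert Pi x y z t s b < upert Pi x y z t s a ↔
      ((Pi.1.idxOf a : ℝ) + pert x y z t s a < (Pi.1.idxOf b : ℝ) + pert x y z t s b) := by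
  have hm2 : (0:ℝ) < (Fintype.card C : ℝ) + 2 := by positivity
  rw [upert, upert, div_lt_div_iff_of_pos_right hm2]
  constructor <;> intro <;> linarith

theorem upert_util01 (Pi : Pref C) (x y z : C) {t s : ℝ} (ht : |t| < 1/4)
    (hs : |s| < 1/4) : Utility01 (upert Pi x y z t s) := by
  intro w
  have hm2 : (0:ℝ) < (Fintype.card C : ℝ) + 2 := by positivity
  have h1 := pert_small (x := x) (y := y) (z := z) ht hs w
  have h2 : (Pi.1.idxOf w : ℝ) ≤ (Fintype.card C : ℝ) - 1 := by
    have h3 := PrefAux.idx_lt Pi w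
    rw [PrefAux.length_eq Pi] at h3
    have h4 : (Pi.1.idxOf w : ℝ) + 1 ≤ (Fintype.card C : ℝ) := by
      exact_mod_cast Nat.succ_le_of_lt h3
    linarith
  have h3 : (0:ℝ) ≤ (Pi.1.idxOf w : ℝ) := Nat.cast_nonneg _
  rw [abs_lt] at h1
  constructor
  · apply div_nonneg _ hm2.le
    linarith
  · rw [upert, div_le_one hm2]
    linarith

theorem upert_consistent (Pi : Pref C) {x y : C} (hD : DirectlyAbove Pi x y) (z : C)
    {t s : ℝ} (ht0 : 0 < t) (ht : t < 1/4) (hs : |s| < 1/4) :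
    ConsistentOn Finset.univ (upert Pi x y z t s) Pi := by
  have hxy : x ≠ y := PrefAux.pref_ne hD.1
  have hyx : Pi.1.idxOf y = Pi.1.idxOf x + 1 := (PrefAux.directlyAbove_iff hxy).1 hD
  have hry : (Pi.1.idxOf y : ℝ) = (Pi.1.idxOf x : ℝ) + 1 := by exact_mod_cast hyx
  have htabs : |t| < 1/4 := abs_lt.2 ⟨by linarith, ht⟩
  intro a _ b _
  rw [upert_lt_iff, PrefAux.pref_def]
  by_cases h1 : a = x ∧ b = y
  · obtain ⟨rfl, rfl⟩ := h1
    apply iff_of_true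
    · rw [pert_x, pert_y hxy, hry]; linarith
    · omega
  by_cases h2 : a = y ∧ b = x
  · obtain ⟨rfl, rfl⟩ := h2
    apply iff_of_false
    · rw [pert_x, pert_y hxy, hry]; push_neg; linarith
    · omega
  by_cases hab : a = b
  · subst hab
    exact iff_of_false (lt_irrefl _) (Nat.lt_irrefl _)
  · exact cast_key _ _ _ _ (fun h => hab (PrefAux.idx_inj h)) (pert_gap htabs hs hab h1 h2)

theorem upert_consistent' (Pi : Pref C) {x y : C} (hD : DirectlyAbove Pi x y) (z : C)
    (hzx : z ≠ x) (hzy : z ≠ y) {t s : ℝ} (ht0 : t < 0) (ht : -(1/4) < t) (hs : |s| < 1/4) :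
    ConsistentOn Finset.univ (upert Pi x y z t s) (Pi.swapC x y) := by
  have hxy : x ≠ y := PrefAux.pref_ne hD.1
  have hyx : Pi.1.idxOf y = Pi.1.idxOf x + 1 := (PrefAux.directlyAbove_iff hxy).1 hD
  have hry : (Pi.1.idxOf y : ℝ) = (Pi.1.idxOf x : ℝ) + 1 := by exact_mod_cast hyx
  have htabs : |t| < 1/4 := abs_lt.2 ⟨ht, by linarith⟩
  have hidx' : ∀ w : C, (Pi.swapC x y).1.idxOf w = Pi.1.idxOf (Equiv.swap x y w) :=
    fun w => PrefAux.idx_swapC Pi x y w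
  have hix : (Pi.swapC x y).1.idxOf x = Pi.1.idxOf y := by
    rw [hidx', Equiv.swap_apply_left]
  have hiy : (Pi.swapC x y).1.idxOf y = Pi.1.idxOf x := by
    rw [hidx', Equiv.swap_apply_right]
  have hiw : ∀ w : C, w ≠ x → w ≠ y → (Pi.swapC x y).1.idxOf w = Pi.1.idxOf w := by
    intro w hwx hwy
    rw [hidx', Equiv.swap_apply_of_ne_of_ne hwx hwy]
  intro a _ b _
  rw [upert_lt_iff, PrefAux.pref_def]
  by_cases h1 : a = x ∧ b = y
  · obtain ⟨rfl, rfl⟩ := h1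
    apply iff_of_false
    · rw [pert_x, pert_y hxy, hry]; push_neg; linarith
    · rw [hix, hiy]; omega
  by_cases h2 : a = y ∧ b = x
  · obtain ⟨rfl, rfl⟩ := h2
    apply iff_of_true
    · rw [pert_x, pert_y hxy, hry]; linarith
    · rw [hix, hiy]; omega
  by_cases hab : a = b
  · subst hab
    exact iff_of_false (lt_irrefl _) (Nat.lt_irrefl _)
  · -- generic pair: compare with the swapped index function
    set E : C → ℝ := fun w =>
      (Pi.1.idxOf w : ℝ) + pert x y z t s w - (((Pi.swapC x y).1.idxOf w : ℕ) : ℝ) with hE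
    have hkey := cast_key ((Pi.swapC x y).1.idxOf a) ((Pi.swapC x y).1.idxOf b)
      (E a) (E b) (fun h => hab (PrefAux.idx_inj (P := Pi.swapC x y) h))
    have hshape2 : ∀ w : C, (((Pi.swapC x y).1.idxOf w : ℕ) : ℝ) + E w
        = (Pi.1.idxOf w : ℝ) + pert x y z t s w := fun w => by rw [hE]; ring
    have hEx : E x = -(1/2) - t := by
      rw [hE]; simp only; rw [pert_x, hix, hry]; ring
    have hEy : E y = 1/2 + t := by
      rw [hE]; simp only; rw [pert_y hxy, hiy, hry]; ring
    have hE3 : ∀ w : C, |E w| < 3/4 := by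
      intro w
      by_cases hwx : w = x
      · subst hwx; rw [hEx, abs_lt]; constructor <;> linarith
      by_cases hwy : w = y
      · subst hwy; rw [hEy, abs_lt]; constructor <;> linarith
      · have : E w = pert x y z t s w := by rw [hE]; simp only; rw [hiw w hwx hwy]; ring
        rw [this]
        have := pert_tiny (x := x) (y := y) (z := z) (t := t) hs hwx hwy
        rw [abs_lt] at this ⊢; constructor <;> linarith
    have hE1 : ∀ w : C, w ≠ x → w ≠ y → |E w| < 1/4 := by
      intro w hwx hwy
      have : E w = pert x y z t s w := by rw [hE]; simp only; rw [hiw w hwx hwy]; ring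
      rw [this]
      exact pert_tiny (t := t) hs hwx hwy
    have hbound : |E a - E b| < 1 := by
      have habs := abs_sub_le' (E a) (E b)
      by_cases ha : a = x ∨ a = y
      · have hbx : b ≠ x := by
          rintro rfl
          rcases ha with rfl | rfl
          · exact hab rfl
          · exact h2 ⟨rfl, rfl⟩
        have hby : b ≠ y := by
          rintro rfl
          rcases ha with rfl | rfl
          · exact h1 ⟨rfl, rfl⟩
          · exact hab rfl
        have t1 := hE1 b hbx hby
        have t2 := hE3 a
        linarith
      · push_neg at ha
        have t1 := hE1 a ha.1 ha.2
        have t2 := hE3 b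
        linarith
    rw [hshape2, hshape2] at hkey
    exact hkey hbound


theorem sum_trip {x y z : C} (hxy : x ≠ y) (hzx : z ≠ x) (hzy : z ≠ y)
    (A B E : ℝ) (g : C → ℝ) :
    (∑ w : C, (if w = x then A else if w = y then B else if w = z then E else 0) * g w)
      = A * g x + B * g y + E * g z := by
  have hpt : ∀ w : C, (if w = x then A else if w = y then B else if w = z then E else 0) * g w
      = (if w = x then A * g x else 0) + (if w = y then B * g y else 0)
        + (if w = z then E * g z else 0) := by
    intro w
    by_cases h1 : w = x
    · subst h1
      rw [if_pos rfl, if_pos rfl, if_neg hxy, if_neg (Ne.symm hzx)]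
      ring
    rw [if_neg h1, if_neg h1]
    by_cases h2 : w = y
    · subst h2
      rw [if_pos rfl, if_pos rfl, if_neg (Ne.symm hzy)]
      ring
    rw [if_neg h2, if_neg h2]
    by_cases h3 : w = z
    · subst h3
      rw [if_pos rfl, if_pos rfl]
      ring
    · rw [if_neg h3, if_neg h3]
      ring
  rw [Finset.sum_congr rfl (fun w _ => hpt w), Finset.sum_add_distrib, Finset.sum_add_distrib,
    Finset.sum_ite_eq' Finset.univ x (fun _ => A * g x),
    Finset.sum_ite_eq' Finset.univ y (fun _ => B * g y),
    Finset.sum_ite_eq' Finset.univ z (fun _ => E * g z),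
    if_pos (Finset.mem_univ x), if_pos (Finset.mem_univ y), if_pos (Finset.mem_univ z)]

theorem upert_decomp (Pi : Pref C) {x y z : C}
    (hxy : x ≠ y) (hzx : z ≠ x) (hzy : z ≠ y) (t s : ℝ) (w : C) :
    upert Pi x y z t s w = upert Pi x y z 0 0 w +
      (if w = x then t / ((Fintype.card C : ℝ) + 2)
       else if w = y then -(t / ((Fintype.card C : ℝ) + 2))
       else if w = z then s / ((Fintype.card C : ℝ) + 2) else 0) := by
  have hm2 : ((Fintype.card C : ℝ) + 2) ≠ 0 := by positivity
  rw [upert, upert, pert, pert]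
  by_cases h1 : w = x
  · subst h1; rw [if_pos rfl, if_pos rfl, if_pos rfl]; field_simp; ring
  rw [if_neg h1, if_neg h1, if_neg h1]
  by_cases h2 : w = y
  · subst h2; rw [if_pos rfl, if_pos rfl, if_pos rfl]; field_simp; ring
  rw [if_neg h2, if_neg h2, if_neg h2]
  by_cases h3 : w = z
  · subst h3; rw [if_pos rfl, if_pos rfl, if_pos rfl]; field_simp; ring
  · rw [if_neg h3, if_neg h3, if_neg h3]; ring

theorem resp_main {n : ℕ} (v : (Fin n → Pref C) → C → ℝ)
    (hanon : Anonymous v) (hsp : WeaklySP v) : PairwiseResponsive v := by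
  classical
  intro P i x y hD z hzx hzy
  have hxy : x ≠ y := PrefAux.pref_ne hD.1
  haveI : Nonempty (Pref C) := ⟨P i⟩
  have hJ : Fintype.card {j : Fin n // j ≠ i} < n := by
    have h := Fintype.card_subtype_lt (p := fun j : Fin n => j ≠ i) (x := i) (by simp)
    simpa using h
  -- symmetry of the coefficient function, via anonymity
  have hcombperm : ∀ (Q0 : Pref C) (σ : Equiv.Perm {j : Fin n // j ≠ i})
      (R : {j : Fin n // j ≠ i} → Pref C),
      v (combine i Q0 (R ∘ σ)) = v (combine i Q0 R) := by
    intro Q0 σ R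
    have heq : (fun j => (combine i Q0 R) (Equiv.Perm.ofSubtype σ j)) = combine i Q0 (R ∘ σ) := by
      funext j
      by_cases hj : j = i
      · rw [hj]
        rw [Equiv.Perm.ofSubtype_apply_of_not_mem σ (p := fun k : Fin n => k ≠ i) (by simp)]
        simp [combine]
      · rw [Equiv.Perm.ofSubtype_apply_of_mem σ (p := fun k : Fin n => k ≠ i) hj]
        have hne := (σ ⟨j, hj⟩).2
        simp [combine, hj, hne]
    rw [← heq]
    exact hanon (Equiv.Perm.ofSubtype σ) (combine i Q0 R)
  have hsym : ∀ (σ : Equiv.Perm {j : Fin n // j ≠ i}) (R : {j : Fin n // j ≠ i} → Pref C),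
      (fun R : {j : Fin n // j ≠ i} → Pref C =>
        v (combine i (P i) R) z - v (combine i ((P i).swapC x y) R) z) (R ∘ σ)
      = (fun R : {j : Fin n // j ≠ i} → Pref C =>
        v (combine i (P i) R) z - v (combine i ((P i).swapC x y) R) z) R := by
    intro σ R
    show v (combine i (P i) (R ∘ σ)) z - v (combine i ((P i).swapC x y) (R ∘ σ)) z
        = v (combine i (P i) R) z - v (combine i ((P i).swapC x y) R) z
    rw [hcombperm (P i) σ R, hcombperm ((P i).swapC x y) σ R]
  -- the per-belief identity
  have hzero : ∀ φ : Pref C → ℝ, (∀ q, 0 ≤ φ q) → (∑ q, φ q) = 1 →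
      (∑ R : {j : Fin n // j ≠ i} → Pref C, (∏ j, φ (R j)) *
        (v (combine i (P i) R) z - v (combine i ((P i).swapC x y) R) z)) = 0 := by
    intro φ hφ0 hφ1
    set g : C → ℝ := fun w => ∑ R : {j : Fin n // j ≠ i} → Pref C,
      (∏ j, φ (R j)) * (v (combine i (P i) R) w - v (combine i ((P i).swapC x y) R) w) with hg
    show g z = 0
    have hEU : ∀ u : C → ℝ, EU v u φ i (P i) - EU v u φ i ((P i).swapC x y)
        = ∑ w, u w * g w := by
      intro u
      simp only [EU]
      rw [← Finset.sum_sub_distrib]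
      have hterm : ∀ R : {j : Fin n // j ≠ i} → Pref C,
          (∏ j, φ (R j)) * (∑ w, v (combine i (P i) R) w * u w)
          - (∏ j, φ (R j)) * (∑ w, v (combine i ((P i).swapC x y) R) w * u w)
          = ∑ w, u w * ((∏ j, φ (R j)) * (v (combine i (P i) R) w
              - v (combine i ((P i).swapC x y) R) w)) := by
        intro R
        rw [← mul_sub, ← Finset.sum_sub_distrib, Finset.mul_sum]
        apply Finset.sum_congr rfl
        intro w _
        ring
      rw [Finset.sum_congr rfl (fun R _ => hterm R), Finset.sum_comm]
      apply Finset.sum_congr rfl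
      intro w _
      exact (Finset.mul_sum _ _ _).symm
    have hSP1 : ∀ t s : ℝ, 0 < t → t < 1/4 → |s| < 1/4 →
        0 ≤ ∑ w, upert (P i) x y z t s w * g w := by
      intro t s ht0 ht4 hs
      have htabs : |t| < 1/4 := abs_lt.2 ⟨by linarith, ht4⟩
      have h := hsp i (P i) ((P i).swapC x y) φ (Set.mem_univ _) ⟨hφ0, hφ1⟩
        (upert (P i) x y z t s) (upert_util01 (P i) x y z htabs hs)
        (upert_consistent (P i) hD z ht0 ht4 hs)
      have h2 := hEU (upert (P i) x y z t s)
      linarith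
    have hSP2 : ∀ t s : ℝ, -(1/4) < t → t < 0 → |s| < 1/4 →
        (∑ w, upert (P i) x y z t s w * g w) ≤ 0 := by
      intro t s ht4 ht0 hs
      have htabs : |t| < 1/4 := abs_lt.2 ⟨ht4, by linarith⟩
      have h := hsp i ((P i).swapC x y) (P i) φ (Set.mem_univ _) ⟨hφ0, hφ1⟩
        (upert (P i) x y z t s) (upert_util01 (P i) x y z htabs hs)
        (upert_consistent' (P i) hD z hzx hzy ht0 ht4 hs)
      have h2 := hEU (upert (P i) x y z t s)
      linarith
    have hdecomp : ∀ t s : ℝ, (∑ w, upert (P i) x y z t s w * g w)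
        = (∑ w, upert (P i) x y z 0 0 w * g w)
          + (t / ((Fintype.card C : ℝ) + 2)) * g x
          + (-(t / ((Fintype.card C : ℝ) + 2))) * g y
          + (s / ((Fintype.card C : ℝ) + 2)) * g z := by
      intro t s
      have h1 : ∀ w, upert (P i) x y z t s w * g w = upert (P i) x y z 0 0 w * g w
          + (if w = x then t / ((Fintype.card C : ℝ) + 2)
             else if w = y then -(t / ((Fintype.card C : ℝ) + 2))
             else if w = z then s / ((Fintype.card C : ℝ) + 2) else 0) * g w := by
        intro w
        rw [upert_decomp (P i) hxy hzx hzy t s w]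
        ring
      rw [Finset.sum_congr rfl (fun w _ => h1 w), Finset.sum_add_distrib,
        sum_trip hxy hzx hzy]
      ring
    have hbase : ∀ s : ℝ, |s| < 1/4 →
        (∑ w, upert (P i) x y z 0 0 w * g w)
          + (s / ((Fintype.card C : ℝ) + 2)) * g z = 0 := by
      intro s hs
      apply AuxReal.eq_zero_of_local (ε := 1/4)
        (K := (g x - g y) / ((Fintype.card C : ℝ) + 2)) (by norm_num)
      · intro t ht0 ht4
        have h := hSP1 t s ht0 ht4 hs
        rw [hdecomp t s] at h
        have hr : (∑ w, upert (P i) x y z 0 0 w * g w)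
            + (t / ((Fintype.card C : ℝ) + 2)) * g x
            + (-(t / ((Fintype.card C : ℝ) + 2))) * g y
            + (s / ((Fintype.card C : ℝ) + 2)) * g z
            = ((∑ w, upert (P i) x y z 0 0 w * g w)
              + (s / ((Fintype.card C : ℝ) + 2)) * g z)
              + t * ((g x - g y) / ((Fintype.card C : ℝ) + 2)) := by ring
        linarith
      · intro t ht4 ht0
        have h := hSP2 t s ht4 ht0 hs
        rw [hdecomp t s] at h
        have hr : (∑ w, upert (P i) x y z 0 0 w * g w)
            + (t / ((Fintype.card C : ℝ) + 2)) * g x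
            + (-(t / ((Fintype.card C : ℝ) + 2))) * g y
            + (s / ((Fintype.card C : ℝ) + 2)) * g z
            = ((∑ w, upert (P i) x y z 0 0 w * g w)
              + (s / ((Fintype.card C : ℝ) + 2)) * g z)
              + t * ((g x - g y) / ((Fintype.card C : ℝ) + 2)) := by ring
        linarith
    have h0 := hbase 0 (by norm_num)
    have h8 := hbase (1/8) (by rw [abs_of_nonneg (by norm_num : (0:ℝ) ≤ 1/8)]; norm_num)
    have hgz : (1/8) / ((Fintype.card C : ℝ) + 2) * g z = 0 := by
      have : (0:ℝ) / ((Fintype.card C : ℝ) + 2) * g z = 0 := by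
        rw [zero_div, zero_mul]
      linarith
    have hden : (1/8) / ((Fintype.card C : ℝ) + 2) ≠ 0 := by positivity
    rcases mul_eq_zero.1 hgz with h | h
    · exact absurd h hden
    · exact h
  have hall := AuxPoly.coeff_extract hJ
    (fun R : {j : Fin n // j ≠ i} → Pref C =>
      v (combine i (P i) R) z - v (combine i ((P i).swapC x y) R) z) hsym hzero
  have hc0 := hall (fun j => P j.1)
  have hcomb1 : combine i (P i) (fun j : {j : Fin n // j ≠ i} => P j.1) = P := by
    funext j
    by_cases h : j = i
    · rw [h]; simp [combine]
    · simp [combine, h]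
  have hcomb2 : combine i ((P i).swapC x y) (fun j : {j : Fin n // j ≠ i} => P j.1)
      = Function.update P i ((P i).swapC x y) := by
    funext j
    by_cases h : j = i
    · rw [h]; simp [combine]
    · simp [combine, h, Function.update_of_ne h]
  rw [hcomb1, hcomb2] at hc0
  linarith

end RespProof



section IsoProof

variable {C : Type} [Fintype C] [DecidableEq C]

instance PrefAux.decPref (P : Pref C) (a b : C) : Decidable (P.pref a b) :=
  decidable_of_iff _ (PrefAux.pref_def P a b).symm

/-- The number of pairs on which two orderings disagree (ordered version). -/
def pdist (W W' : Pref C) : ℕ :=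
  (Finset.univ.filter (fun p : C × C => W.pref p.1 p.2 ∧ W'.pref p.2 p.1)).card

theorem pdist_eq_zero {W W' : Pref C} (h : pdist W W' = 0) : W = W' := by
  have hemp := Finset.card_eq_zero.1 h
  have hnot : ∀ a b : C, ¬(W.pref a b ∧ W'.pref b a) := by
    intro a b hc
    have hmem : (a, b) ∈ Finset.univ.filter
        (fun p : C × C => W.pref p.1 p.2 ∧ W'.pref p.2 p.1) :=
      Finset.mem_filter.2 ⟨Finset.mem_univ _, hc⟩
    rw [hemp] at hmem
    exact absurd hmem (Finset.notMem_empty _)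
  apply PrefAux.pref_ext
  intro a b
  constructor
  · intro hab
    have hne : a ≠ b := PrefAux.pref_ne hab
    rcases PrefAux.pref_total (P := W') hne with h1 | h1
    · exact h1
    · exact absurd ⟨hab, h1⟩ (hnot a b)
  · intro hab
    by_contra hnab
    have hne : a ≠ b := PrefAux.pref_ne hab
    rcases PrefAux.pref_total (P := W) hne with h1 | h1
    · exact hnab h1
    · exact absurd ⟨h1, hab⟩ (hnot b a)

theorem pref_of_adj (W W' : Pref C) (h : ∀ a b, DirectlyAbove W a b → W'.pref a b) :
    ∀ a b, W.pref a b → W'.pref a b := by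
  have hgap : ∀ (g : ℕ), ∀ a b : C, W.1.idxOf b = W.1.idxOf a + g + 1 → W'.pref a b := by
    intro g
    induction g with
    | zero =>
      intro a b hab
      have hne : a ≠ b := by intro he; rw [he] at hab; omega
      exact h a b ((PrefAux.directlyAbove_iff hne).2 hab)
    | succ g ih =>
      intro a b hab
      have hlt : W.1.idxOf a + 1 < W.1.length := by
        have := PrefAux.idx_lt W b; omega
      have hic : W.1.idxOf (W.1[W.1.idxOf a + 1]) = W.1.idxOf a + 1 :=
        PrefAux.idx_getElem W _ hlt
      have hac : W'.pref a (W.1[W.1.idxOf a + 1]) := by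
        have hne : a ≠ W.1[W.1.idxOf a + 1] := by intro he; rw [← he] at hic; omega
        exact h a _ ((PrefAux.directlyAbove_iff hne).2 hic)
      have hcb : W'.pref (W.1[W.1.idxOf a + 1]) b := ih _ b (by omega)
      exact PrefAux.pref_trans hac hcb
  intro a b hab
  rw [PrefAux.pref_def] at hab
  exact hgap (W.1.idxOf b - W.1.idxOf a - 1) a b (by omega)

theorem exists_adj_disagree {W W' : Pref C} (h : W ≠ W') :
    ∃ a b, DirectlyAbove W a b ∧ W'.pref b a := by
  by_contra hn
  push_neg at hn
  have hadj : ∀ a b, DirectlyAbove W a b → W'.pref a b := by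
    intro a b hDab
    have hne : a ≠ b := PrefAux.pref_ne hDab.1
    rcases PrefAux.pref_total (P := W') hne with h1 | h1
    · exact h1
    · exact absurd h1 (hn a b hDab)
  have hall := pref_of_adj W W' hadj
  apply h
  apply PrefAux.pref_ext
  intro a b
  constructor
  · exact hall a b
  · intro hab
    by_contra hnab
    have hne : a ≠ b := PrefAux.pref_ne hab
    rcases PrefAux.pref_total (P := W) hne with h1 | h1
    · exact hnab h1
    · exact PrefAux.pref_asymm hab (hall b a h1)

theorem swap_pref_ba {W : Pref C} {a b : C} (hD : DirectlyAbove W a b) :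
    (W.swapC a b).pref b a := by
  rw [PrefAux.pref_def, PrefAux.idx_swapC, PrefAux.idx_swapC, Equiv.swap_apply_right,
    Equiv.swap_apply_left]
  exact hD.1

theorem swap_pref_other {W : Pref C} {a b : C} (hD : DirectlyAbove W a b) (u w : C)
    (h1 : ¬(u = a ∧ w = b)) (h2 : ¬(u = b ∧ w = a)) :
    ((W.swapC a b).pref u w ↔ W.pref u w) := by
  have hab : a ≠ b := PrefAux.pref_ne hD.1
  have hadj : W.1.idxOf b = W.1.idxOf a + 1 := (PrefAux.directlyAbove_iff hab).1 hD
  rw [PrefAux.pref_def, PrefAux.pref_def, PrefAux.idx_swapC, PrefAux.idx_swapC]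
  by_cases hua : u = a
  · rw [hua, Equiv.swap_apply_left]
    by_cases hwa : w = a
    · rw [hwa, Equiv.swap_apply_left]
      constructor <;> (intro hc; omega)
    · have hwb : w ≠ b := fun he => h1 ⟨hua, he⟩
      rw [Equiv.swap_apply_of_ne_of_ne hwa hwb]
      have hia : W.1.idxOf w ≠ W.1.idxOf a := fun he => hwa (PrefAux.idx_inj he)
      have hib : W.1.idxOf w ≠ W.1.idxOf b := fun he => hwb (PrefAux.idx_inj he)
      omega
  by_cases hub : u = b
  · rw [hub, Equiv.swap_apply_right]
    by_cases hwb : w = b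
    · rw [hwb, Equiv.swap_apply_right]
      constructor <;> (intro hc; omega)
    · have hwa : w ≠ a := fun he => h2 ⟨hub, he⟩
      rw [Equiv.swap_apply_of_ne_of_ne hwa hwb]
      have hia : W.1.idxOf w ≠ W.1.idxOf a := fun he => hwa (PrefAux.idx_inj he)
      have hib : W.1.idxOf w ≠ W.1.idxOf b := fun he => hwb (PrefAux.idx_inj he)
      omega
  · rw [Equiv.swap_apply_of_ne_of_ne hua hub]
    have hia : W.1.idxOf u ≠ W.1.idxOf a := fun he => hua (PrefAux.idx_inj he)
    have hib : W.1.idxOf u ≠ W.1.idxOf b := fun he => hub (PrefAux.idx_inj he)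
    by_cases hwa : w = a
    · rw [hwa, Equiv.swap_apply_left]
      omega
    by_cases hwb : w = b
    · rw [hwb, Equiv.swap_apply_right]
      omega
    · rw [Equiv.swap_apply_of_ne_of_ne hwa hwb]

theorem pdist_swap {W W' : Pref C} {a b : C} (hD : DirectlyAbove W a b)
    (hba : W'.pref b a) : pdist W W' = pdist (W.swapC a b) W' + 1 := by
  have hab : a ≠ b := PrefAux.pref_ne hD.1
  have hS : (Finset.univ.filter (fun p : C × C => W.pref p.1 p.2 ∧ W'.pref p.2 p.1))
      = insert (a, b) (Finset.univ.filter
          (fun p : C × C => (W.swapC a b).pref p.1 p.2 ∧ W'.pref p.2 p.1)) := by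
    ext p
    rcases p with ⟨u, w⟩
    simp only [Finset.mem_filter, Finset.mem_insert, Finset.mem_univ, true_and,
      Prod.mk.injEq]
    by_cases h1 : u = a ∧ w = b
    · obtain ⟨rfl, rfl⟩ := h1
      constructor
      · intro _; left; exact ⟨rfl, rfl⟩
      · intro _; exact ⟨hD.1, hba⟩
    by_cases h2 : u = b ∧ w = a
    · obtain ⟨rfl, rfl⟩ := h2
      constructor
      · intro hc; exact absurd hc.1 (PrefAux.pref_asymm hD.1)
      · intro hc
        rcases hc with ⟨he, _⟩ | hc
        · exact absurd he (Ne.symm hab)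
        · exact absurd hc.2 (PrefAux.pref_asymm hba)
    · rw [swap_pref_other hD u w h1 h2]
      constructor
      · intro hc; right; exact hc
      · intro hc
        rcases hc with ⟨he1, he2⟩ | hc
        · exact absurd ⟨he1, he2⟩ h1
        · exact hc
  rw [pdist, pdist, hS, Finset.card_insert_of_notMem]
  intro hmem
  rw [Finset.mem_filter] at hmem
  exact PrefAux.pref_asymm hmem.2.1 (swap_pref_ba hD)

set_option maxHeartbeats 2000000 in
theorem iso_main {n : ℕ} (v : (Fin n → Pref C) → C → ℝ) (hv : IsVotingRule v)
    (hresp : PairwiseResponsive v) : PairwiseIsolated v := by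
  classical
  intro x y i P P' hD hP'i hor
  have hxy : x ≠ y := PrefAux.pref_ne hD.1
  set Pi : Pref C := P i with hPi
  set Φ : (Fin n → Pref C) → ℝ := fun Q =>
    v (Function.update Q i (Pi.swapC x y)) y - v (Function.update Q i Pi) y with hΦ
  have hrespi : ∀ (Q : Fin n → Pref C) (w : C), w ≠ x → w ≠ y →
      v (Function.update Q i (Pi.swapC x y)) w = v (Function.update Q i Pi) w := by
    intro Q w hwx hwy
    have hDi : DirectlyAbove ((Function.update Q i Pi) i) x y := by
      rw [Function.update_self]; exact hD
    have h := hresp (Function.update Q i Pi) i x y hDi w hwx hwy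
    rw [Function.update_self, Function.update_idem] at h
    exact h
  have hxform : ∀ Q : Fin n → Pref C,
      Φ Q = v (Function.update Q i Pi) x - v (Function.update Q i (Pi.swapC x y)) x := by
    intro Q
    have h1 : ∑ w, v (Function.update Q i Pi) w = 1 := (hv _).2
    have h2 : ∑ w, v (Function.update Q i (Pi.swapC x y)) w = 1 := (hv _).2
    have hsplit : ∀ f : C → ℝ, (∑ w, f w)
        = f x + (f y + ∑ w ∈ (Finset.univ.erase x).erase y, f w) := by
      intro f
      rw [← Finset.add_sum_erase _ f (Finset.mem_univ x),
        ← Finset.add_sum_erase _ f (Finset.mem_erase.2 ⟨Ne.symm hxy, Finset.mem_univ y⟩)]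
    have h3 : (∑ w ∈ (Finset.univ.erase x).erase y, v (Function.update Q i (Pi.swapC x y)) w)
        = ∑ w ∈ (Finset.univ.erase x).erase y, v (Function.update Q i Pi) w := by
      apply Finset.sum_congr rfl
      intro w hw
      have hwy : w ≠ y := (Finset.mem_erase.1 hw).1
      have hwx : w ≠ x := (Finset.mem_erase.1 (Finset.mem_erase.1 hw).2).1
      exact hrespi Q w hwx hwy
    have e1 := (hsplit (v (Function.update Q i Pi))).symm.trans h1
    have e2 := (hsplit (v (Function.update Q i (Pi.swapC x y)))).symm.trans h2
    show v (Function.update Q i (Pi.swapC x y)) y - v (Function.update Q i Pi) y = _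
    linarith
  have hstep1 : ∀ (Q : Fin n → Pref C) (j : Fin n), j ≠ i → ∀ a b : C,
      DirectlyAbove (Q j) a b → ¬(a = x ∧ b = y) → ¬(a = y ∧ b = x) →
      Φ (Function.update Q j ((Q j).swapC a b)) = Φ Q := by
    intro Q j hj a b hab h1 h2
    by_cases hy : y = a ∨ y = b
    · have hxa : x ≠ a := by
        intro he
        rcases hy with hy | hy
        · exact hxy (he.trans hy.symm)
        · exact h1 ⟨he.symm, hy.symm⟩
      have hxb : x ≠ b := by
        intro he
        rcases hy with hy | hy
        · exact h2 ⟨hy.symm, he.symm⟩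
        · exact hxy (he.trans hy.symm)
      have key : ∀ Z : Pref C,
          v (Function.update (Function.update Q j ((Q j).swapC a b)) i Z) x
          = v (Function.update Q i Z) x := by
        intro Z
        rw [Function.update_comm hj]
        have hBj : (Function.update Q i Z) j = Q j := Function.update_of_ne hj _ _
        have h := hresp (Function.update Q i Z) j a b (by rw [hBj]; exact hab) x hxa hxb
        rw [hBj] at h
        exact h
      rw [hxform (Function.update Q j ((Q j).swapC a b)), hxform Q, key Pi,
        key (Pi.swapC x y)]
    · push_neg at hy
      have key : ∀ Z : Pref C,
          v (Function.update (Function.update Q j ((Q j).swapC a b)) i Z) y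
          = v (Function.update Q i Z) y := by
        intro Z
        rw [Function.update_comm hj]
        have hBj : (Function.update Q i Z) j = Q j := Function.update_of_ne hj _ _
        have h := hresp (Function.update Q i Z) j a b (by rw [hBj]; exact hab) y
          hy.1 hy.2
        rw [hBj] at h
        exact h
      show v (Function.update (Function.update Q j ((Q j).swapC a b)) i (Pi.swapC x y)) y
          - v (Function.update (Function.update Q j ((Q j).swapC a b)) i Pi) y = _
      rw [key Pi, key (Pi.swapC x y)]
  have hstep : ∀ (D : ℕ) (Q : Fin n → Pref C) (j : Fin n), j ≠ i → ∀ W' : Pref C,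
      pdist (Q j) W' = D → ((Q j).pref x y ↔ W'.pref x y) →
      Φ (Function.update Q j W') = Φ Q := by
    intro D
    induction D using Nat.strong_induction_on with
    | _ D ih =>
      intro Q j hj W' hdist hor2
      by_cases hW : Q j = W'
      · rw [← hW, Function.update_eq_self]
      · obtain ⟨a, b, hab, hba⟩ := exists_adj_disagree hW
        have h1 : ¬(a = x ∧ b = y) := by
          rintro ⟨rfl, rfl⟩
          exact PrefAux.pref_asymm (hor2.1 hab.1) hba
        have h2 : ¬(a = y ∧ b = x) := by
          rintro ⟨rfl, rfl⟩
          exact PrefAux.pref_asymm hab.1 (hor2.2 hba)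
        have hΦ1 := hstep1 Q j hj a b hab h1 h2
        have hds := pdist_swap hab hba
        rw [hdist] at hds
        have hor3 : ((Function.update Q j ((Q j).swapC a b)) j).pref x y ↔ W'.pref x y := by
          rw [Function.update_self]
          rw [swap_pref_other hab x y (fun hc => h1 ⟨hc.1.symm, hc.2.symm⟩)
            (fun hc => h2 ⟨hc.2.symm, hc.1.symm⟩)]
          exact hor2
        have hupd : Function.update Q j W'
            = Function.update (Function.update Q j ((Q j).swapC a b)) j W' := by
          rw [Function.update_idem]
        rw [hupd]
        rw [ih (D - 1) (by omega) (Function.update Q j ((Q j).swapC a b)) j hj W'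
          (by rw [Function.update_self]; omega) hor3]
        exact hΦ1
  have hmix : ∀ S : Finset (Fin n), Φ (fun j => if j ∈ S then P j else P' j) = Φ P' := by
    intro S
    induction S using Finset.induction_on with
    | empty =>
      have he : (fun j => if j ∈ (∅ : Finset (Fin n)) then P j else P' j) = P' := by
        funext k; simp
      rw [he]
    | @insert j S hjS ih =>
      have hupd : (fun k => if k ∈ insert j S then P k else P' k)
          = Function.update (fun k => if k ∈ S then P k else P' k) j (P j) := by
        funext k
        by_cases hk : k = j
        · rw [hk]; simp
        · rw [Function.update_of_ne hk]
          simp [Finset.mem_insert, hk]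
      rw [hupd]
      by_cases hji : j = i
      · have hno : (fun k => if k ∈ S then P k else P' k) j = P j := by
          by_cases hjS2 : j ∈ S
          · simp [hjS2]
          · simp [hjS2, hji, hP'i, hPi]
        rw [← hno, Function.update_eq_self]
        exact ih
      · rw [hstep (pdist ((fun k => if k ∈ S then P k else P' k) j) (P j)) _ j hji (P j)
          rfl ?_]
        · exact ih
        · by_cases hjS2 : j ∈ S
          · simp only [hjS2, if_true]
          · simp only [hjS2, if_false]
            exact (hor j).symm
  have hfinal := hmix Finset.univ
  have huniv : (fun j => if j ∈ (Finset.univ : Finset (Fin n)) then P j else P' j) = P := by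
    funext j; simp
  rw [huniv] at hfinal
  have hPup : Function.update P i Pi = P := Function.update_eq_self i P
  have hP'up : Function.update P' i Pi = P' := by
    rw [← hP'i]; exact Function.update_eq_self i P'
  rw [hP'i]
  have hL : Φ P' = v (Function.update P' i (Pi.swapC x y)) y - v P' y := by
    show v (Function.update P' i (Pi.swapC x y)) y - v (Function.update P' i Pi) y = _
    rw [hP'up]
  have hR : Φ P = v (Function.update P i (Pi.swapC x y)) y - v P y := by
    show v (Function.update P i (Pi.swapC x y)) y - v (Function.update P i Pi) y = _
    rw [hPup]
  rw [← hL, ← hR]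
  exact hfinal.symm

end IsoProof

/-- Any anonymous, weakly strategy-proof randomized voting rule is
pairwise responsive and pairwise isolated. -/
theorem stmt1 {C : Type} [Fintype C] [DecidableEq C] {n : ℕ}
    (v : (Fin n → Pref C) → C → ℝ) (hv : IsVotingRule v) (hanon : Anonymous v)
    (hsp : WeaklySP v) :
    PairwiseResponsive v ∧ PairwiseIsolated v := by
  have hr := resp_main v hanon hsp
  exact ⟨hr, iso_main v hv hr⟩
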